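/- Let h(x) = −2·log x_k + xᵀAx + ∑_{i=1}^{k−1} ρ(|x_i|; λ, γ) with A positive semidefinite, A_{ii} > 0 for all i, and MCP penalty ρ. If γ > max{1/(2A_{ii}), 1} for each i ∈ {1,…,k−1}, then for each fixed choice of the other coordinates, h is a strictly convex function of x_i. -/

import Mathlib

open Matrix BigOperators

/-- The minimax concave penalty (MCP). -/
noncomputable def mcp (lam gam θ : ℝ) : ℝ :=
  if |θ| < gam * lam then lam * |θ| - θ ^ 2 / (2 * gam) else gam * lam ^ 2 / 2

lemma smul_strictConvexOn' {c : ℝ} (hc : 0 < c) {f : ℝ → ℝ}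
    (hf : StrictConvexOn ℝ Set.univ f) :
    StrictConvexOn ℝ Set.univ (fun t => c * f t) := by
  refine ⟨convex_univ, fun x _ y _ hxy a b ha hb hab => ?_⟩
  have h := hf.2 (Set.mem_univ x) (Set.mem_univ y) hxy ha hb hab
  simp only [smul_eq_mul] at h ⊢
  nlinarith [h]

lemma affine_convexOn' (b d : ℝ) : ConvexOn ℝ Set.univ (fun t : ℝ => b * t + d) := by
  refine ⟨convex_univ, fun x _ y _ a c ha hc hac => ?_⟩
  simp only [smul_eq_mul]
  apply le_of_eq
  linear_combination (-d) * hac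

lemma relu_sq_convexOn' (b d : ℝ) :
    ConvexOn ℝ Set.univ (fun t : ℝ => max (b * t + d) 0 ^ 2) := by
  have h1 := (affine_convexOn' b d).sup (convexOn_const (0:ℝ) convex_univ)
  have h2 := h1.pow (fun x _ => le_max_right _ _) 2
  exact h2

lemma abs_convexOn' : ConvexOn ℝ Set.univ (fun t : ℝ => |t|) := by
  refine ⟨convex_univ, fun x _ y _ a b ha hb _ => ?_⟩
  simp only [smul_eq_mul]
  exact (abs_add_le _ _).trans (le_of_eq (by rw [abs_mul, abs_mul, abs_of_nonneg ha, abs_of_nonneg hb]))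

lemma mcp_decomp' (lam gam : ℝ) (hgam : 0 < gam) (hlam : 0 ≤ lam) (c t : ℝ) :
    c * t ^ 2 + mcp lam gam t =
      (c - 1 / (2 * gam)) * t ^ 2 + lam * |t| +
        (1 / (2 * gam)) *
          (max (1 * t + -(gam * lam)) 0 ^ 2 + max (-1 * t + -(gam * lam)) 0 ^ 2) := by
  have hgl : 0 ≤ gam * lam := mul_nonneg hgam.le hlam
  have hg : gam ≠ 0 := ne_of_gt hgam
  unfold mcp
  by_cases h : |t| < gam * lam
  · have h1 : 1 * t + -(gam * lam) ≤ 0 := by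
      have := abs_lt.mp h; linarith [this.2]
    have h2 : -1 * t + -(gam * lam) ≤ 0 := by
      have := abs_lt.mp h; linarith [this.1]
    rw [if_pos h, max_eq_right h1, max_eq_right h2]
    field_simp
    ring
  · rw [if_neg h]
    push_neg at h
    rcases le_or_gt 0 t with ht | ht
    · have habs : |t| = t := abs_of_nonneg ht
      rw [habs] at h
      have h1 : (0:ℝ) ≤ 1 * t + -(gam * lam) := by linarith
      have h2 : -1 * t + -(gam * lam) ≤ 0 := by linarith
      rw [max_eq_left h1, max_eq_right h2, abs_of_nonneg ht]
      field_simp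
      ring
    · have habs : |t| = -t := abs_of_neg ht
      rw [habs] at h
      have h1 : 1 * t + -(gam * lam) ≤ 0 := by linarith
      have h2 : (0:ℝ) ≤ -1 * t + -(gam * lam) := by linarith
      rw [max_eq_right h1, max_eq_left h2, abs_of_neg ht]
      field_simp
      ring

lemma key_strictConvex' (c lam gam : ℝ) (hc : 1 / (2 * gam) < c) (hgam : 0 < gam)
    (hlam : 0 ≤ lam) :
    StrictConvexOn ℝ Set.univ (fun t : ℝ => c * t ^ 2 + mcp lam gam t) := by
  have heq : (fun t : ℝ => c * t ^ 2 + mcp lam gam t) =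
      fun t : ℝ => (c - 1 / (2 * gam)) * t ^ 2 +
        (lam * |t| +
          (1 / (2 * gam)) *
            (max (1 * t + -(gam * lam)) 0 ^ 2 + max (-1 * t + -(gam * lam)) 0 ^ 2)) := by
    funext t
    rw [mcp_decomp' lam gam hgam hlam c t]
    ring
  rw [heq]
  have hstrict : StrictConvexOn ℝ Set.univ (fun t : ℝ => (c - 1 / (2 * gam)) * t ^ 2) :=
    smul_strictConvexOn' (by linarith) (Even.strictConvexOn_pow (by norm_num) (by norm_num))
  have hconv : ConvexOn ℝ Set.univ (fun t : ℝ =>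
      lam * |t| +
        (1 / (2 * gam)) *
          (max (1 * t + -(gam * lam)) 0 ^ 2 + max (-1 * t + -(gam * lam)) 0 ^ 2)) := by
    refine ConvexOn.add ?_ ?_
    · exact abs_convexOn'.smul hlam
    · exact (ConvexOn.add (relu_sq_convexOn' 1 (-(gam * lam)))
        (relu_sq_convexOn' (-1) (-(gam * lam)))).smul (by positivity)
  exact hstrict.add_convexOn hconv

lemma quad_expand' {k : ℕ} (A : Matrix (Fin (k+1)) (Fin (k+1)) ℝ) (x : Fin (k+1) → ℝ)
    (i : Fin (k+1)) (t : ℝ) :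
    Function.update x i t ⬝ᵥ (A *ᵥ Function.update x i t) =
      A i i * t ^ 2 +
        ((∑ l ∈ Finset.univ.erase i, A i l * x l) +
          ∑ j ∈ Finset.univ.erase i, x j * A j i) * t +
        ∑ j ∈ Finset.univ.erase i, x j * ∑ l ∈ Finset.univ.erase i, A j l * x l := by
  set u := Function.update x i t with hu
  have hui : u i = t := Function.update_self i t x
  have huj : ∀ j ∈ Finset.univ.erase i, u j = x j := fun j hj =>
    Function.update_of_ne (Finset.ne_of_mem_erase hj) t x
  have hmv : ∀ j, (A *ᵥ u) j = A j i * t + ∑ l ∈ Finset.univ.erase i, A j l * x l := by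
    intro j
    show ∑ l, A j l * u l = _
    rw [← Finset.add_sum_erase _ _ (Finset.mem_univ i), hui]
    congr 1
    exact Finset.sum_congr rfl fun l hl => by rw [huj l hl]
  show ∑ j, u j * (A *ᵥ u) j = _
  rw [← Finset.add_sum_erase _ _ (Finset.mem_univ i), hui, hmv]
  have : ∑ j ∈ Finset.univ.erase i, u j * (A *ᵥ u) j =
      (∑ j ∈ Finset.univ.erase i, x j * A j i) * t +
        ∑ j ∈ Finset.univ.erase i, x j * ∑ l ∈ Finset.univ.erase i, A j l * x l := by
    rw [Finset.sum_mul, ← Finset.sum_add_distrib]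
    exact Finset.sum_congr rfl fun j hj => by rw [huj j hj, hmv]; ring
  rw [this]
  ring

/-- If `γ > max{1/(2A_ii), 1}`, then the coordinatewise Cholesky score
`h(x) = −2 log x_k + xᵀAx + ∑_{i<k} ρ(|x_i|; λ, γ)` is, for each `i < k` and
fixed other coordinates, a strictly convex function of `x_i`. -/
theorem coordinatewise_strict_convexity {k : ℕ}
    (A : Matrix (Fin (k + 1)) (Fin (k + 1)) ℝ) (hA : A.PosSemidef)
    (hdiag : ∀ i, 0 < A i i) (lam gam : ℝ) (hlam : 0 ≤ lam)
    (hgam : ∀ i : Fin (k + 1), i ≠ Fin.last k → max (1 / (2 * A i i)) 1 < gam)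
    (x : Fin (k + 1) → ℝ) (hx : 0 < x (Fin.last k)) :
    ∀ i : Fin (k + 1), i ≠ Fin.last k →
      StrictConvexOn ℝ Set.univ (fun t : ℝ =>
        -2 * Real.log (Function.update x i t (Fin.last k)) +
          Function.update x i t ⬝ᵥ (A *ᵥ Function.update x i t) +
          ∑ j ∈ Finset.univ.erase (Fin.last k),
            mcp lam gam (Function.update x i t j)) := by
  intro i hi
  have hAii : 0 < A i i := hdiag i
  have hgam1 : (1:ℝ) < gam := lt_of_le_of_lt (le_max_right _ _) (hgam i hi)
  have hgam0 : (0:ℝ) < gam := lt_trans one_pos hgam1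
  have hc : 1 / (2 * gam) < A i i := by
    have h2 : 1 / (2 * A i i) < gam := lt_of_le_of_lt (le_max_left _ _) (hgam i hi)
    rw [div_lt_iff₀ (by positivity)] at h2 ⊢
    nlinarith
  -- constants
  set B : ℝ := (∑ l ∈ Finset.univ.erase i, A i l * x l) +
      ∑ j ∈ Finset.univ.erase i, x j * A j i with hB
  set C : ℝ := -2 * Real.log (x (Fin.last k)) +
      (∑ j ∈ Finset.univ.erase i, x j * ∑ l ∈ Finset.univ.erase i, A j l * x l) +
      ∑ j ∈ (Finset.univ.erase (Fin.last k)).erase i, mcp lam gam (x j) with hC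
  have hmem : i ∈ Finset.univ.erase (Fin.last k) :=
    Finset.mem_erase.mpr ⟨hi, Finset.mem_univ i⟩
  have heq : (fun t : ℝ =>
        -2 * Real.log (Function.update x i t (Fin.last k)) +
          Function.update x i t ⬝ᵥ (A *ᵥ Function.update x i t) +
          ∑ j ∈ Finset.univ.erase (Fin.last k),
            mcp lam gam (Function.update x i t j)) =
      fun t : ℝ => (A i i * t ^ 2 + mcp lam gam t) + (B * t + C) := by
    funext t
    have hlog : Function.update x i t (Fin.last k) = x (Fin.last k) :=
      Function.update_of_ne (Ne.symm hi) t x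
    have hsum : ∑ j ∈ Finset.univ.erase (Fin.last k),
        mcp lam gam (Function.update x i t j) =
        mcp lam gam t +
          ∑ j ∈ (Finset.univ.erase (Fin.last k)).erase i, mcp lam gam (x j) := by
      rw [← Finset.add_sum_erase _ _ hmem, Function.update_self]
      congr 1
      exact Finset.sum_congr rfl fun j hj => by
        rw [Function.update_of_ne (Finset.ne_of_mem_erase hj) t x]
    rw [hlog, quad_expand' A x i t, hsum, hB, hC]
    ring
  rw [heq]
  exact (key_strictConvex' (A i i) lam gam hc hgam0 hlam).add_convexOn (affine_convexOn' B C)
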